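/- Let c ≥ 0, s, n be integers with n ≥ 2^(c+1)·s and s > c, and let W be a c × n matrix over ZMod 2. Then for each vector v ∈ (ZMod 2)^n, the number of vectors x ∈ (ZMod 2)^n satisfying W·x = W·v and wt(x) ≤ s is at least (n / (2^(c+1)·s))^(s−c−1), where the right-hand side is interpreted as a real number. -/

import Mathlib

/-- Hamming weight of a vector over `ZMod 2`. -/
def hWt {m : ℕ} (x : Fin m → ZMod 2) : ℕ :=
  (Finset.univ.filter fun i => x i ≠ 0).card

lemma exists_ker {c n : ℕ} (W : Matrix (Fin c) (Fin n) (ZMod 2)) (B : Finset (Fin n))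
    (hB : c < B.card) :
    ∃ z : Fin n → ZMod 2, z ≠ 0 ∧ W.mulVec z = 0 ∧ ∀ i, z i ≠ 0 → i ∈ B := by
  classical
  set ext : (B → ZMod 2) → (Fin n → ZMod 2) :=
    fun u i => if h : i ∈ B then u ⟨i, h⟩ else 0 with hext
  have hcard : Fintype.card (Fin c → ZMod 2) < Fintype.card (B → ZMod 2) := by
    simp only [Fintype.card_fun, Fintype.card_fin, ZMod.card, Fintype.card_coe]
    exact Nat.pow_lt_pow_right one_lt_two hB
  obtain ⟨u, u', huu, heq⟩ := Fintype.exists_ne_map_eq_of_card_lt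
    (fun u : (B → ZMod 2) => W.mulVec (ext u)) hcard
  refine ⟨ext u - ext u', ?_, ?_, ?_⟩
  · obtain ⟨b, hb⟩ := Function.ne_iff.mp huu
    intro h
    have := congrFun h b.1
    simp only [hext, Pi.sub_apply, dif_pos b.2, Pi.zero_apply, sub_eq_zero] at this
    exact hb (by simpa using this)
  · rw [Matrix.mulVec_sub, heq, sub_self]
  · intro i hi
    by_contra hiB
    simp [hext, dif_neg hiB] at hi

lemma zmod2_cases (a : ZMod 2) : a = 0 ∨ a = 1 := by fin_cases a; exacts [Or.inl rfl, Or.inr rfl]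

lemma exists_small {c n : ℕ} (W : Matrix (Fin c) (Fin n) (ZMod 2)) :
    ∀ N (v : Fin n → ZMod 2), hWt v ≤ N →
      ∃ x0, W.mulVec x0 = W.mulVec v ∧ hWt x0 ≤ c := by
  classical
  intro N
  induction N with
  | zero => exact fun v hv => ⟨v, rfl, le_trans hv (Nat.zero_le c)⟩
  | succ N ih =>
    intro v hv
    by_cases h : hWt v ≤ c
    · exact ⟨v, rfl, h⟩
    push_neg at h
    obtain ⟨z, hz0, hzker, hzsupp⟩ := exists_ker W (Finset.univ.filter fun i => v i ≠ 0) h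
    have hvz : hWt (v + z) < hWt v := by
      apply Finset.card_lt_card
      constructor
      · intro i hi
        simp only [Finset.mem_filter, Finset.mem_univ, true_and, Pi.add_apply] at hi ⊢
        intro hvi
        apply hi
        have hzi : z i = 0 := by
          by_contra hzi
          exact (by simpa using hzsupp i hzi : v i ≠ 0) hvi
        rw [hvi, hzi, add_zero]
      · intro hsub
        obtain ⟨b, hb⟩ := Function.ne_iff.mp hz0
        simp only [Pi.zero_apply] at hb
        have hvb : v b ≠ 0 := by simpa using hzsupp b hb
        have : (v + z) b ≠ 0 := by
          have := hsub (by simp [hvb] : b ∈ Finset.univ.filter fun i => v i ≠ 0)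
          simpa using this
        apply this
        rcases zmod2_cases (v b) with h1 | h1 <;> rcases zmod2_cases (z b) with h2 | h2 <;>
          simp_all
        exact this (by decide)
    obtain ⟨x0, hx0, hx0wt⟩ := ih (v + z) (by omega)
    exact ⟨x0, by rw [hx0, Matrix.mulVec_add, hzker, add_zero], hx0wt⟩

lemma exists_small' {c n : ℕ} (W : Matrix (Fin c) (Fin n) (ZMod 2)) (v : Fin n → ZMod 2) :
    ∃ x0, W.mulVec x0 = W.mulVec v ∧ hWt x0 ≤ c :=
  exists_small W (hWt v) v le_rfl

theorem stmt_6 (c s n : ℕ) (hn : 2 ^ (c + 1) * s ≤ n) (hs : c < s)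
    (W : Matrix (Fin c) (Fin n) (ZMod 2)) (v : Fin n → ZMod 2) :
    ((n : ℝ) / (2 ^ (c + 1) * s)) ^ (s - c - 1) ≤
      (({x : Fin n → ZMod 2 | W.mulVec x = W.mulVec v ∧ hWt x ≤ s}).ncard : ℝ) := by
  classical
  obtain ⟨x0, hx0v, hx0wt⟩ := exists_small' W v
  set S : Set (Fin n → ZMod 2) := {x | W.mulVec x = W.mulVec v ∧ hWt x ≤ s} with hSdef
  have hS : S.Finite := Set.toFinite S
  set col : Fin n → (Fin c → ZMod 2) := fun j k => W k j with hcol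
  set U : Finset (Fin n) := Finset.univ.filter (fun j => x0 j = 0) with hU
  have hcard2 : (Finset.univ : Finset (Fin c → ZMod 2)).card = 2 ^ c := by
    simp [Finset.card_univ, ZMod.card]
  obtain ⟨t0, -, hfib⟩ := Finset.exists_le_card_fiber_of_mul_le_card_of_maps_to
    (f := col) (s := U) (fun j _ => Finset.mem_univ _)
    Finset.univ_nonempty (n := U.card / 2 ^ c)
    (by rw [hcard2, mul_comm]; exact Nat.div_mul_le_self _ _)
  set P : Finset (Fin n) := U.filter (fun j => col j = t0) with hP
  set m : ℕ := P.card with hm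
  -- basic cardinality facts
  have hUcard : U.card + hWt x0 = n := by
    have := Finset.card_filter_add_card_filter_not
      (s := (Finset.univ : Finset (Fin n))) (p := fun j => x0 j = 0)
    simpa [hU, hWt] using this
  have hUm : U.card < 2 ^ c * (m + 1) := by
    have h1 : U.card / 2 ^ c < m + 1 := Nat.lt_succ_of_le hfib
    have h2 := (Nat.div_lt_iff_lt_mul (by positivity : 0 < 2 ^ c)).mp h1
    rw [mul_comm]
    exact h2
  have hkey : n + 1 ≤ 2 ^ c * (m + 1) + c := by omega
  set k0 : ℕ := 2 * ((s - c) / 2) with hk0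
  have hk0r : k0 ≤ s - c := by omega
  have hk0r' : s - c - 1 ≤ k0 := by omega
  have hk0m : k0 ≤ m := by
    by_contra hcon
    push_neg at hcon
    have h1 : 2 ^ c * (m + 1) ≤ 2 ^ c * s := Nat.mul_le_mul_left _ (by omega)
    have h2 : s ≤ 2 ^ c * s := Nat.le_mul_of_pos_left s (by positivity : 0 < 2 ^ c)
    have h3 : 2 ^ (c + 1) * s = 2 * (2 ^ c * s) := by ring
    omega
  -- the injection from even subsets of P
  set Φ : Finset (Fin n) → (Fin n → ZMod 2) :=
    fun E i => x0 i + (if i ∈ E then 1 else 0) with hΦ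
  have hx0P : ∀ j ∈ P, x0 j = 0 := by
    intro j hj
    have := Finset.mem_filter.mp (Finset.mem_filter.mp hj).1
    simpa using this.2
  have hΦmem : ∀ E ∈ P.powersetCard k0, Φ E ∈ hS.toFinset := by
    intro E hE
    obtain ⟨hEP, hEcard⟩ := Finset.mem_powersetCard.mp hE
    rw [Set.Finite.mem_toFinset]
    constructor
    · have hadd : Φ E = x0 + (fun i => if i ∈ E then (1 : ZMod 2) else 0) := rfl
      rw [hadd, Matrix.mulVec_add, hx0v]
      have hz : W.mulVec (fun i => if i ∈ E then (1 : ZMod 2) else 0) = 0 := by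
        funext k
        have : W.mulVec (fun i => if i ∈ E then (1 : ZMod 2) else 0) k
            = ∑ j ∈ E, W k j := by
          simp only [Matrix.mulVec, dotProduct, mul_ite, mul_one, mul_zero]
          rw [Finset.sum_ite_mem, Finset.univ_inter]
        rw [this]
        have hterm : ∀ j ∈ E, W k j = t0 k := by
          intro j hj
          have hcolj : col j = t0 := (Finset.mem_filter.mp (hEP hj)).2
          exact congrFun hcolj k
        rw [Finset.sum_congr rfl hterm, Finset.sum_const, hEcard]
        have hcast : ((k0 : ℕ) : ZMod 2) = 0 :=
          (ZMod.natCast_eq_zero_iff _ _).mpr ⟨(s - c) / 2, rfl⟩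
        rw [nsmul_eq_mul, hcast, zero_mul, Pi.zero_apply]
      rw [hz, add_zero]
    · have hsub : Finset.univ.filter (fun i => Φ E i ≠ 0) ⊆
          (Finset.univ.filter fun i => x0 i ≠ 0) ∪ E := by
        intro i hi
        simp only [Finset.mem_filter, Finset.mem_univ, true_and, Finset.mem_union] at hi ⊢
        by_contra hcon
        push_neg at hcon
        apply hi
        simp [hΦ, hcon.1, if_neg hcon.2]
      calc hWt (Φ E) ≤ ((Finset.univ.filter fun i => x0 i ≠ 0) ∪ E).card :=
              Finset.card_le_card hsub
        _ ≤ hWt x0 + E.card := Finset.card_union_le _ _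
        _ ≤ c + (s - c) := by rw [hEcard]; omega
        _ = s := by omega
  have hΦinj : Set.InjOn Φ (P.powersetCard k0 : Finset (Finset (Fin n))) := by
    have key : ∀ E1 E2 : Finset (Fin n), E1 ⊆ P → Φ E1 = Φ E2 → ∀ i ∈ E1, i ∈ E2 := by
      intro E1 E2 hE1P heq i hi
      have hx0i : x0 i = 0 := hx0P i (hE1P hi)
      have := congrFun heq i
      simp only [hΦ, hx0i, zero_add] at this
      rw [if_pos hi] at this
      by_contra hcon
      rw [if_neg hcon] at this
      exact one_ne_zero this
    intro E1 h1 E2 h2 heq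
    rw [Finset.mem_coe, Finset.mem_powersetCard] at h1 h2
    ext i
    exact ⟨fun hi => key E1 E2 h1.1 heq i hi, fun hi => key E2 E1 h2.1 heq.symm i hi⟩
  have hcount : m.choose k0 ≤ S.ncard := by
    rw [Set.ncard_eq_toFinset_card S hS, ← Finset.card_powersetCard]
    exact Finset.card_le_card_of_injOn Φ hΦmem hΦinj
  -- final arithmetic
  have hs0 : 0 < s := by omega
  rcases Nat.eq_zero_or_pos k0 with hk00 | hk0pos
  · have : s - c - 1 = 0 := by omega
    rw [this, pow_zero]
    have : 1 ≤ S.ncard := le_trans (by simp [hk00]) hcount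
    exact_mod_cast this
  · have hb1 : (1 : ℝ) ≤ (n : ℝ) / (2 ^ (c + 1) * s) := by
      rw [le_div_iff₀ (by positivity), one_mul]
      exact_mod_cast hn
    have castM : ((m + 1 - k0 : ℕ) : ℝ) = (m : ℝ) + 1 - (k0 : ℝ) := by
      push_cast [Nat.cast_sub (by omega : k0 ≤ m + 1)]
      ring
    have h1 : (n : ℝ) / (2 ^ (c + 1) * s) ≤ ((m + 1 - k0 : ℕ) : ℝ) / (k0 : ℝ) := by
      rw [div_le_div_iff₀ (by positivity) (by exact_mod_cast hk0pos), castM]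
      have hA : (1 : ℝ) ≤ 2 ^ c := one_le_pow₀ (by norm_num)
      have f1 : (n : ℝ) + 1 ≤ 2 ^ c * ((m : ℝ) + 1) + c := by exact_mod_cast hkey
      have f2 : 2 * 2 ^ c * (s : ℝ) ≤ n := by
        have : ((2 ^ (c + 1) * s : ℕ) : ℝ) ≤ n := by exact_mod_cast hn
        push_cast [pow_succ] at this
        linarith
      have f3 : (k0 : ℝ) ≤ (s : ℝ) - c := by
        have : (k0 : ℝ) ≤ ((s - c : ℕ) : ℝ) := by exact_mod_cast hk0r
        rwa [Nat.cast_sub (le_of_lt hs)] at this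
      have f4 : (c : ℝ) + 1 ≤ s := by exact_mod_cast hs
      have f5 : (1 : ℝ) ≤ k0 := by exact_mod_cast hk0pos
      have hc0 : (0 : ℝ) ≤ c := Nat.cast_nonneg c
      have hsr : (0 : ℝ) ≤ s := Nat.cast_nonneg s
      have hnr : (0 : ℝ) ≤ n := Nat.cast_nonneg n
      have e1 : (2 : ℝ) ^ (c + 1) = 2 * 2 ^ c := by ring
      rw [e1]
      nlinarith [mul_le_mul_of_nonneg_left f1 (by linarith : (0:ℝ) ≤ 2 * s),
        mul_le_mul_of_nonneg_left f3 (by positivity : (0:ℝ) ≤ 2 * 2 ^ c * s),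
        mul_le_mul_of_nonneg_left f3 hnr,
        mul_le_mul_of_nonneg_right f2 hsr,
        mul_nonneg (mul_nonneg (by linarith : (0:ℝ) ≤ 2 ^ c - 1) hsr) hc0]
    have hq0 : (0 : ℝ) ≤ ((m + 1 - k0 : ℕ) : ℝ) / (k0 : ℝ) := by positivity
    have hfact : (0 : ℝ) < (Nat.factorial k0 : ℝ) := by exact_mod_cast Nat.factorial_pos k0
    calc ((n : ℝ) / (2 ^ (c + 1) * s)) ^ (s - c - 1)
        ≤ ((n : ℝ) / (2 ^ (c + 1) * s)) ^ k0 := pow_le_pow_right₀ hb1 hk0r'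
      _ ≤ (((m + 1 - k0 : ℕ) : ℝ) / (k0 : ℝ)) ^ k0 := pow_le_pow_left₀ (by positivity) h1 k0
      _ = ((m + 1 - k0 : ℕ) : ℝ) ^ k0 / (k0 : ℝ) ^ k0 := div_pow _ _ _
      _ ≤ ((m + 1 - k0 : ℕ) : ℝ) ^ k0 / (Nat.factorial k0 : ℝ) := by
          apply div_le_div_of_nonneg_left (by positivity) hfact
          exact_mod_cast Nat.factorial_le_pow k0
      _ ≤ (m.choose k0 : ℝ) := by
          exact Nat.pow_le_choose (α := ℝ) k0 m
      _ ≤ (S.ncard : ℝ) := by exact_mod_cast hcount
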